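/- arXiv:0911.2856 — 3 statements merged into one kernel-verified Lean document; each statement's English description precedes it below -/
import Mathlib

section
/- Let J be a bounded operator on ℓ²(ℕ) whose Lax-pair evolution satisfies J̇ = J J_- − J_- J, where J_- is the strictly lower part of J (a four-banded matrix as in the Kostant-Toda setting). Then for every n ∈ ℕ, the leading 2×2 block satisfies d/dt (J^n)_{11} = (J^n)_{11} (J_-)_{11} − (J_-)_{11} (J^n)_{11} + (J^n)_{12} (J_-)_{21}, where M_{ij} denotes the 2×2 block of M formed by rows 2i−1, 2i and columns 2j−1, 2j. -/
open Finset

noncomputable section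

/-- The infinite four-banded matrix `J(t)`. -/
def Jmat (a b c : ℕ → ℝ → ℂ) (t : ℝ) (i j : ℕ) : ℂ :=
  if i = j then a (i + 1) t
  else if j = i + 1 then 1
  else if i = j + 1 then b (j + 1) t
  else if i = j + 2 then c (j + 1) t
  else 0

/-- The strictly lower part `J_-` of `J`. -/
def Jminus (b c : ℕ → ℝ → ℂ) (t : ℝ) (i j : ℕ) : ℂ :=
  if i = j + 1 then b (j + 1) t
  else if i = j + 2 then c (j + 1) t
  else 0

/-- Product of banded infinite matrices; for `M` with nonzero entries of row `i` in
columns `≤ i + 2`, this is the genuine matrix product. -/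
def bmul (M N : ℕ → ℕ → ℂ) (i j : ℕ) : ℂ :=
  ∑ k ∈ Finset.range (max i j + 3), M i k * N k j

/-- The `n`-th power of `J`.  Since row `i` of `J` has its nonzero entries in columns
`≤ i + 1`, the finite sum below is the genuine matrix product `J · J^n`. -/
def Jpow (a b c : ℕ → ℝ → ℂ) (t : ℝ) : ℕ → ℕ → ℕ → ℂ
  | 0 => fun i j => if i = j then 1 else 0
  | n + 1 => fun i j => ∑ k ∈ Finset.range (i + 2), Jmat a b c t i k * Jpow a b c t n k j

/-- The 2×2 block of an infinite matrix with (0-based) block position `(p,q)`, i.e. the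
rows `2p+1, 2p+2` and columns `2q+1, 2q+2` in 1-based numbering. -/
def blk (M : ℕ → ℕ → ℂ) (p q : ℕ) : Matrix (Fin 2) (Fin 2) ℂ :=
  Matrix.of fun r s : Fin 2 => M (2 * p + (r : ℕ)) (2 * q + (s : ℕ))

lemma Jmat_band (a b c : ℕ → ℝ → ℂ) (t : ℝ) {i k : ℕ} (h : i + 2 ≤ k) :
    Jmat a b c t i k = 0 := by
  unfold Jmat; split_ifs <;> first | rfl | omega

lemma Jminus_band₁ (b c : ℕ → ℝ → ℂ) (t : ℝ) {l j : ℕ} (h : j + 3 ≤ l) :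
    Jminus b c t l j = 0 := by
  unfold Jminus; split_ifs <;> first | rfl | omega

lemma Jminus_band₂ (b c : ℕ → ℝ → ℂ) (t : ℝ) {i l : ℕ} (h : i ≤ l) :
    Jminus b c t i l = 0 := by
  unfold Jminus; split_ifs <;> first | rfl | omega

lemma sum_drop {f : ℕ → ℂ} {m n : ℕ} (h : m ≤ n) (h0 : ∀ k, m ≤ k → f k = 0) :
    ∑ k ∈ Finset.range n, f k = ∑ k ∈ Finset.range m, f k :=
  (Finset.sum_subset (Finset.range_subset_range.mpr h) fun k _ hk =>
    h0 k (le_of_not_gt fun hlt => hk (Finset.mem_range.mpr hlt))).symm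

lemma Jpow_hasDerivAt (a b c : ℕ → ℝ → ℂ)
    (hLax : ∀ t : ℝ, ∀ i j : ℕ,
      HasDerivAt (fun s => Jmat a b c s i j)
        (bmul (Jmat a b c t) (Jminus b c t) i j
          - bmul (Jminus b c t) (Jmat a b c t) i j) t) :
    ∀ (n : ℕ) (t : ℝ) (i j : ℕ),
      HasDerivAt (fun s => Jpow a b c s n i j)
        (bmul (Jpow a b c t n) (Jminus b c t) i j
          - bmul (Jminus b c t) (Jpow a b c t n) i j) t := by
  intro n
  induction n with
  | zero =>
    intro t i j
    have h1 : bmul (Jpow a b c t 0) (Jminus b c t) i j = Jminus b c t i j := by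
      simp only [bmul, Jpow, ite_mul, one_mul, zero_mul, Finset.sum_ite_eq,
        Finset.mem_range]
      rw [if_pos (by have := le_max_left i j; omega)]
    have h2 : bmul (Jminus b c t) (Jpow a b c t 0) i j = Jminus b c t i j := by
      simp only [bmul, Jpow, mul_ite, mul_one, mul_zero, Finset.sum_ite_eq',
        Finset.mem_range]
      rw [if_pos (by have := le_max_right i j; omega)]
    rw [h1, h2, sub_self]
    exact hasDerivAt_const t _
  | succ n IH =>
    intro t i j
    have key : HasDerivAt (fun s => Jpow a b c s (n+1) i j)
        (∑ k ∈ Finset.range (i+2),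
          ((bmul (Jmat a b c t) (Jminus b c t) i k
             - bmul (Jminus b c t) (Jmat a b c t) i k) * Jpow a b c t n k j
           + Jmat a b c t i k *
             (bmul (Jpow a b c t n) (Jminus b c t) k j
               - bmul (Jminus b c t) (Jpow a b c t n) k j))) t := by
      simp only [Jpow]
      exact HasDerivAt.fun_sum fun k _ => (hLax t i k).mul (IH t k j)
    convert key using 1
    set M := i + j + n + 6 with hM
    -- expansion of J^(n+1) entries as sums over range M
    have hP : ∀ i' k, i' + 2 ≤ M → Jpow a b c t (n+1) i' k
        = ∑ l ∈ Finset.range M, Jmat a b c t i' l * Jpow a b c t n l k := by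
      intro i' k h
      simp only [Jpow]
      exact (sum_drop h (fun l hl => by rw [Jmat_band a b c t hl, zero_mul])).symm
    -- target side expansions
    have hT1 : bmul (Jpow a b c t (n+1)) (Jminus b c t) i j
        = ∑ k ∈ Finset.range M, ∑ l ∈ Finset.range M,
            Jmat a b c t i l * Jpow a b c t n l k * Jminus b c t k j := by
      have v : ∀ k, j + 3 ≤ k →
          Jpow a b c t (n+1) i k * Jminus b c t k j = 0 :=
        fun k hk => by rw [Jminus_band₁ b c t hk, mul_zero]
      unfold bmul
      rw [sum_drop (by have := le_max_right i j; omega) v,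
        ← sum_drop (show j + 3 ≤ M by omega) v]
      exact Finset.sum_congr rfl fun k _ => by
        rw [hP i k (by omega), Finset.sum_mul]
    have hT2 : bmul (Jminus b c t) (Jpow a b c t (n+1)) i j
        = ∑ k ∈ Finset.range M, ∑ l ∈ Finset.range M,
            Jminus b c t i k * (Jmat a b c t k l * Jpow a b c t n l j) := by
      have v : ∀ k, i ≤ k →
          Jminus b c t i k * Jpow a b c t (n+1) k j = 0 :=
        fun k hk => by rw [Jminus_band₂ b c t hk, zero_mul]
      unfold bmul
      rw [sum_drop (by have := le_max_left i j; omega) v,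
        ← sum_drop (show i ≤ M by omega) v]
      refine Finset.sum_congr rfl fun k _ => ?_
      rcases lt_or_ge k i with h | h
      · rw [hP k j (by omega), Finset.mul_sum]
      · simp [Jminus_band₂ b c t h]
    -- lax side expansions
    have he1 : ∀ k, bmul (Jmat a b c t) (Jminus b c t) i k
        = ∑ l ∈ Finset.range M, Jmat a b c t i l * Jminus b c t l k := by
      intro k
      have v : ∀ l, i + 2 ≤ l → Jmat a b c t i l * Jminus b c t l k = 0 :=
        fun l hl => by rw [Jmat_band a b c t hl, zero_mul]
      unfold bmul
      rw [sum_drop (by have := le_max_left i k; omega) v,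
        ← sum_drop (show i + 2 ≤ M by omega) v]
    have he2 : ∀ k, bmul (Jminus b c t) (Jmat a b c t) i k
        = ∑ l ∈ Finset.range M, Jminus b c t i l * Jmat a b c t l k := by
      intro k
      have v : ∀ l, i ≤ l → Jminus b c t i l * Jmat a b c t l k = 0 :=
        fun l hl => by rw [Jminus_band₂ b c t hl, zero_mul]
      unfold bmul
      rw [sum_drop (by have := le_max_left i k; omega) v,
        ← sum_drop (show i ≤ M by omega) v]
    have he3 : ∀ k, bmul (Jpow a b c t n) (Jminus b c t) k j
        = ∑ l ∈ Finset.range M, Jpow a b c t n k l * Jminus b c t l j := by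
      intro k
      have v : ∀ l, j + 3 ≤ l → Jpow a b c t n k l * Jminus b c t l j = 0 :=
        fun l hl => by rw [Jminus_band₁ b c t hl, mul_zero]
      unfold bmul
      rw [sum_drop (by have := le_max_right k j; omega) v,
        ← sum_drop (show j + 3 ≤ M by omega) v]
    have he4 : ∀ k, k ≤ M → bmul (Jminus b c t) (Jpow a b c t n) k j
        = ∑ l ∈ Finset.range M, Jminus b c t k l * Jpow a b c t n l j := by
      intro k hk
      have v : ∀ l, k ≤ l → Jminus b c t k l * Jpow a b c t n l j = 0 :=
        fun l hl => by rw [Jminus_band₂ b c t hl, zero_mul]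
      unfold bmul
      rw [sum_drop (by have := le_max_left k j; omega) v, ← sum_drop hk v]
    -- rewrite the lax side summand and extend outer range to M
    have hE : (∑ k ∈ Finset.range (i+2),
          ((bmul (Jmat a b c t) (Jminus b c t) i k
             - bmul (Jminus b c t) (Jmat a b c t) i k) * Jpow a b c t n k j
           + Jmat a b c t i k *
             (bmul (Jpow a b c t n) (Jminus b c t) k j
               - bmul (Jminus b c t) (Jpow a b c t n) k j)))
        = ∑ k ∈ Finset.range M,
          ((∑ l ∈ Finset.range M, Jmat a b c t i l * Jminus b c t l k
             - ∑ l ∈ Finset.range M, Jminus b c t i l * Jmat a b c t l k)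
              * Jpow a b c t n k j
           + Jmat a b c t i k *
             (∑ l ∈ Finset.range M, Jpow a b c t n k l * Jminus b c t l j
               - ∑ l ∈ Finset.range M, Jminus b c t k l * Jpow a b c t n l j)) := by
      rw [show (∑ k ∈ Finset.range (i+2),
          ((bmul (Jmat a b c t) (Jminus b c t) i k
             - bmul (Jminus b c t) (Jmat a b c t) i k) * Jpow a b c t n k j
           + Jmat a b c t i k *
             (bmul (Jpow a b c t n) (Jminus b c t) k j
               - bmul (Jminus b c t) (Jpow a b c t n) k j)))
          = ∑ k ∈ Finset.range (i+2),
          ((∑ l ∈ Finset.range M, Jmat a b c t i l * Jminus b c t l k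
             - ∑ l ∈ Finset.range M, Jminus b c t i l * Jmat a b c t l k)
              * Jpow a b c t n k j
           + Jmat a b c t i k *
             (∑ l ∈ Finset.range M, Jpow a b c t n k l * Jminus b c t l j
               - ∑ l ∈ Finset.range M, Jminus b c t k l * Jpow a b c t n l j))
        from Finset.sum_congr rfl fun k hk => by
          rw [he1 k, he2 k, he3 k, he4 k (by simp at hk; omega)]]
      refine (sum_drop (show i + 2 ≤ M by omega) ?_).symm
      intro k hk
      have z1 : (∑ l ∈ Finset.range M, Jmat a b c t i l * Jminus b c t l k) = 0 := by
        refine Finset.sum_eq_zero fun l _ => ?_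
        rcases le_or_gt (i+2) l with h | h
        · rw [Jmat_band a b c t h, zero_mul]
        · rw [Jminus_band₂ b c t (by omega), mul_zero]
      have z2 : (∑ l ∈ Finset.range M, Jminus b c t i l * Jmat a b c t l k) = 0 := by
        refine Finset.sum_eq_zero fun l _ => ?_
        rcases le_or_gt i l with h | h
        · rw [Jminus_band₂ b c t h, zero_mul]
        · rw [Jmat_band a b c t (by omega), mul_zero]
      rw [z1, z2, Jmat_band a b c t hk, sub_self, zero_mul, zero_mul, add_zero]
    rw [hT1, hT2, hE]
    -- distribute and finish by sum_comm + ring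
    simp only [sub_mul, mul_sub, Finset.sum_mul, Finset.mul_sum,
      Finset.sum_sub_distrib, Finset.sum_add_distrib]
    have c1 : (∑ k ∈ Finset.range M, ∑ l ∈ Finset.range M,
          Jmat a b c t i l * Jpow a b c t n l k * Jminus b c t k j)
        = ∑ k ∈ Finset.range M, ∑ l ∈ Finset.range M,
          Jmat a b c t i k * (Jpow a b c t n k l * Jminus b c t l j) := by
      rw [Finset.sum_comm]
      exact Finset.sum_congr rfl fun k _ => Finset.sum_congr rfl fun l _ => by ring
    have c2 : (∑ k ∈ Finset.range M, ∑ l ∈ Finset.range M,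
          Jminus b c t i k * (Jmat a b c t k l * Jpow a b c t n l j))
        = ∑ k ∈ Finset.range M, ∑ l ∈ Finset.range M,
          Jminus b c t i l * Jmat a b c t l k * Jpow a b c t n k j := by
      rw [Finset.sum_comm]
      exact Finset.sum_congr rfl fun k _ => Finset.sum_congr rfl fun l _ => by ring
    have c3 : (∑ k ∈ Finset.range M, ∑ l ∈ Finset.range M,
          Jmat a b c t i l * Jminus b c t l k * Jpow a b c t n k j)
        = ∑ k ∈ Finset.range M, ∑ l ∈ Finset.range M,
          Jmat a b c t i k * (Jminus b c t k l * Jpow a b c t n l j) := by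
      rw [Finset.sum_comm]
      exact Finset.sum_congr rfl fun k _ => Finset.sum_congr rfl fun l _ => by ring
    rw [c1, c2, c3]
    ring

/-- If `J` is bounded and its evolution satisfies the Lax pair equation
`J̇ = J J_- − J_- J`, then for every `n` the leading 2×2 block satisfies
`d/dt (Jⁿ)₁₁ = (Jⁿ)₁₁ (J_-)₁₁ − (J_-)₁₁ (Jⁿ)₁₁ + (Jⁿ)₁₂ (J_-)₂₁`. -/
theorem deriv_block_of_lax (a b c : ℕ → ℝ → ℂ) (K : ℝ)
    (hbd : ∀ n : ℕ, ∀ t : ℝ,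
      ‖a n t‖ ≤ K ∧ ‖b n t‖ ≤ K ∧ ‖c n t‖ ≤ K)
    (hLax : ∀ t : ℝ, ∀ i j : ℕ,
      HasDerivAt (fun s => Jmat a b c s i j)
        (bmul (Jmat a b c t) (Jminus b c t) i j
          - bmul (Jminus b c t) (Jmat a b c t) i j) t) :
    ∀ n : ℕ, ∀ t : ℝ, ∀ p q : Fin 2,
      HasDerivAt (fun s => blk (Jpow a b c s n) 0 0 p q)
        ((blk (Jpow a b c t n) 0 0 * blk (Jminus b c t) 0 0
          - blk (Jminus b c t) 0 0 * blk (Jpow a b c t n) 0 0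
          + blk (Jpow a b c t n) 0 1 * blk (Jminus b c t) 1 0) p q) t := by
  intro n t p q
  have h := Jpow_hasDerivAt a b c hLax n t (2 * 0 + (p : ℕ)) (2 * 0 + (q : ℕ))
  have hd : ((blk (Jpow a b c t n) 0 0 * blk (Jminus b c t) 0 0
          - blk (Jminus b c t) 0 0 * blk (Jpow a b c t n) 0 0
          + blk (Jpow a b c t n) 0 1 * blk (Jminus b c t) 1 0) p q)
      = bmul (Jpow a b c t n) (Jminus b c t) (2 * 0 + (p : ℕ)) (2 * 0 + (q : ℕ))
        - bmul (Jminus b c t) (Jpow a b c t n) (2 * 0 + (p : ℕ)) (2 * 0 + (q : ℕ)) := by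
    fin_cases p <;> fin_cases q <;>
      simp [blk, bmul, Jminus, Matrix.mul_apply, Matrix.sub_apply, Matrix.add_apply,
        Fin.sum_univ_two, Finset.sum_range_succ] <;> ring
  rw [hd]
  exact h
end
end

section
/- With J, J_- four-banded as in the Kostant-Toda setting, for every n ∈ ℕ one has the block identity (J^{n+1})_{11} = (J^n)_{11} J_{11} + (J^n)_{12} (J_-)_{21}, where M_{ij} denotes the 2×2 block of M formed by rows 2i−1, 2i and columns 2j−1, 2j. Consequently, if J̇ = [J, J_-], then d/dt (J^n)_{11} = (J^{n+1})_{11} − (J^n)_{11} B_1 + [(J^n)_{11}, (J_-)_{11}], where B_1 = J_{11}. -/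
open Finset

noncomputable section

namespace KT
variable (a b c : ℕ → ℝ → ℂ) (t : ℝ)

lemma Jmat_upper {i j : ℕ} (h : i + 1 < j) : Jmat a b c t i j = 0 := by
  unfold Jmat
  rw [if_neg (by omega), if_neg (by omega), if_neg (by omega), if_neg (by omega)]

lemma Jmat_lower {i j : ℕ} (h : j + 2 < i) : Jmat a b c t i j = 0 := by
  unfold Jmat
  rw [if_neg (by omega), if_neg (by omega), if_neg (by omega), if_neg (by omega)]

lemma Jminus_zero {i j : ℕ} (h : i ≤ j) : Jminus b c t i j = 0 := by
  unfold Jminus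
  rw [if_neg (by omega), if_neg (by omega)]

lemma Jminus_lower {i j : ℕ} (h : j + 2 < i) : Jminus b c t i j = 0 := by
  unfold Jminus
  rw [if_neg (by omega), if_neg (by omega)]

lemma Jpow_zero (i j : ℕ) : Jpow a b c t 0 i j = if i = j then 1 else 0 := rfl

lemma Jpow_succ (n i j : ℕ) :
    Jpow a b c t (n + 1) i j
      = ∑ k ∈ Finset.range (i + 2), Jmat a b c t i k * Jpow a b c t n k j := rfl

lemma Jpow_upper : ∀ (n : ℕ) {i j : ℕ}, i + n < j → Jpow a b c t n i j = 0 := by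
  intro n
  induction n with
  | zero => intro i j h; simp [Jpow_zero]; omega
  | succ n ih =>
    intro i j h
    rw [Jpow_succ]
    refine Finset.sum_eq_zero fun k hk => ?_
    rw [Finset.mem_range] at hk
    rcases le_or_gt k (i + 1) with hk' | hk'
    · rw [ih (by omega), mul_zero]
    · rw [Jmat_upper a b c t (by omega), zero_mul]

lemma sum_ext {f : ℕ → ℂ} {N M : ℕ} (h : N ≤ M) (h0 : ∀ k, N ≤ k → f k = 0) :
    ∑ k ∈ Finset.range N, f k = ∑ k ∈ Finset.range M, f k :=
  Finset.sum_subset (Finset.range_subset_range.2 h)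
    (fun x _ hx => h0 x (by simpa using hx))

lemma sum_ext2 {f : ℕ → ℂ} {N M K : ℕ} (hN : K ≤ N) (hM : K ≤ M)
    (h0 : ∀ k, K ≤ k → f k = 0) :
    ∑ k ∈ Finset.range N, f k = ∑ k ∈ Finset.range M, f k :=
  (sum_ext hN h0).symm.trans (sum_ext hM h0)

lemma step_algebra (n i j : ℕ) :
    ∑ k ∈ Finset.range (i + 2),
      ((bmul (Jmat a b c t) (Jminus b c t) i k - bmul (Jminus b c t) (Jmat a b c t) i k)
          * Jpow a b c t n k j
        + Jmat a b c t i k *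
          ∑ m ∈ Finset.range (k + n + 1),
            (Jpow a b c t n k m * Jminus b c t m j - Jminus b c t k m * Jpow a b c t n m j))
    = ∑ k ∈ Finset.range (i + (n + 1) + 1),
        (Jpow a b c t (n + 1) i k * Jminus b c t k j
          - Jminus b c t i k * Jpow a b c t (n + 1) k j) := by
  obtain ⟨N, hN⟩ : ∃ N, N = i + j + n + 6 := ⟨_, rfl⟩
  -- LHS as double sum
  have hL : ∑ k ∈ Finset.range (i + 2),
      ((bmul (Jmat a b c t) (Jminus b c t) i k - bmul (Jminus b c t) (Jmat a b c t) i k)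
          * Jpow a b c t n k j
        + Jmat a b c t i k * ∑ m ∈ Finset.range (k + n + 1),
            (Jpow a b c t n k m * Jminus b c t m j - Jminus b c t k m * Jpow a b c t n m j))
      = ∑ k ∈ Finset.range N, ∑ m ∈ Finset.range N,
          (Jmat a b c t i m * (Jminus b c t m k * Jpow a b c t n k j)
            - Jminus b c t i m * (Jmat a b c t m k * Jpow a b c t n k j)
            + (Jmat a b c t i k * (Jpow a b c t n k m * Jminus b c t m j)
              - Jmat a b c t i k * (Jminus b c t k m * Jpow a b c t n m j))) := by
    have step1 : ∀ k ∈ Finset.range (i + 2),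
        (bmul (Jmat a b c t) (Jminus b c t) i k - bmul (Jminus b c t) (Jmat a b c t) i k)
            * Jpow a b c t n k j
          + Jmat a b c t i k * ∑ m ∈ Finset.range (k + n + 1),
              (Jpow a b c t n k m * Jminus b c t m j - Jminus b c t k m * Jpow a b c t n m j)
        = ∑ m ∈ Finset.range N,
            (Jmat a b c t i m * (Jminus b c t m k * Jpow a b c t n k j)
              - Jminus b c t i m * (Jmat a b c t m k * Jpow a b c t n k j)
              + (Jmat a b c t i k * (Jpow a b c t n k m * Jminus b c t m j)
                - Jmat a b c t i k * (Jminus b c t k m * Jpow a b c t n m j))) := by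
      intro k hk
      rw [Finset.mem_range] at hk
      have hmax : i + 2 ≤ max i k + 3 :=
        le_trans (by omega) (Nat.add_le_add_right (le_max_left i k) 3)
      have e1 : bmul (Jmat a b c t) (Jminus b c t) i k
          = ∑ m ∈ Finset.range N, Jmat a b c t i m * Jminus b c t m k := by
        unfold bmul
        exact sum_ext2 hmax (by omega)
          (fun m hm => by rw [Jmat_upper a b c t (by omega), zero_mul])
      have e2 : bmul (Jminus b c t) (Jmat a b c t) i k
          = ∑ m ∈ Finset.range N, Jminus b c t i m * Jmat a b c t m k := by
        unfold bmul
        exact sum_ext2 (le_trans (by omega : i + 2 ≤ i + 3) (Nat.add_le_add_right (le_max_left i k) 3))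
          (by omega)
          (fun m hm => by rw [Jminus_zero b c t (by omega), zero_mul])
      have e3 : ∑ m ∈ Finset.range (k + n + 1),
            (Jpow a b c t n k m * Jminus b c t m j - Jminus b c t k m * Jpow a b c t n m j)
          = ∑ m ∈ Finset.range N,
            (Jpow a b c t n k m * Jminus b c t m j - Jminus b c t k m * Jpow a b c t n m j) := by
        refine sum_ext (by omega) (fun m hm => ?_)
        rw [Jpow_upper a b c t n (by omega), Jminus_zero b c t (show k ≤ m by omega)]
        ring
      rw [e1, e2, e3, sub_mul, Finset.sum_mul, Finset.sum_mul, Finset.mul_sum,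
        ← Finset.sum_sub_distrib, ← Finset.sum_add_distrib]
      exact Finset.sum_congr rfl fun m _ => by ring
    rw [Finset.sum_congr rfl step1]
    refine sum_ext (by omega) (fun k hk => ?_)
    refine Finset.sum_eq_zero fun m hm => ?_
    have h3 : Jmat a b c t i k = 0 := Jmat_upper a b c t (by omega)
    have h1 : Jmat a b c t i m * (Jminus b c t m k * Jpow a b c t n k j) = 0 := by
      rcases le_or_gt m k with h | h
      · rw [Jminus_zero b c t h, zero_mul, mul_zero]
      · rw [Jmat_upper a b c t (by omega), zero_mul]
    have h2 : Jminus b c t i m * (Jmat a b c t m k * Jpow a b c t n k j) = 0 := by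
      rcases lt_or_ge m i with h | h
      · rw [Jmat_upper a b c t (by omega), zero_mul, mul_zero]
      · rw [Jminus_zero b c t h, zero_mul]
    rw [h1, h2, h3, zero_mul, zero_mul]
    ring
  rw [hL]
  -- RHS pieces as double sums
  have hRA : ∑ k ∈ Finset.range (i + (n + 1) + 1), Jpow a b c t (n + 1) i k * Jminus b c t k j
      = ∑ k ∈ Finset.range N, ∑ m ∈ Finset.range N,
          Jmat a b c t i m * (Jpow a b c t n m k * Jminus b c t k j) := by
    have pad : ∑ k ∈ Finset.range (i + (n + 1) + 1), Jpow a b c t (n + 1) i k * Jminus b c t k j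
        = ∑ k ∈ Finset.range N, Jpow a b c t (n + 1) i k * Jminus b c t k j := by
      refine sum_ext (by omega) (fun k hk => ?_)
      rw [Jpow_upper a b c t (n + 1) (by omega), zero_mul]
    rw [pad]
    refine Finset.sum_congr rfl fun k _ => ?_
    have e : Jpow a b c t (n + 1) i k
        = ∑ m ∈ Finset.range N, Jmat a b c t i m * Jpow a b c t n m k := by
      rw [Jpow_succ]
      exact sum_ext (by omega)
        (fun m hm => by rw [Jmat_upper a b c t (by omega), zero_mul])
    rw [e, Finset.sum_mul]
    exact Finset.sum_congr rfl fun m _ => by ring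
  have hRB : ∑ k ∈ Finset.range (i + (n + 1) + 1), Jminus b c t i k * Jpow a b c t (n + 1) k j
      = ∑ k ∈ Finset.range N, ∑ m ∈ Finset.range N,
          Jminus b c t i k * (Jmat a b c t k m * Jpow a b c t n m j) := by
    have shrink : ∑ k ∈ Finset.range (i + (n + 1) + 1), Jminus b c t i k * Jpow a b c t (n + 1) k j
        = ∑ k ∈ Finset.range i, Jminus b c t i k * Jpow a b c t (n + 1) k j :=
      (sum_ext2 (le_refl i) (by omega)
        (fun k hk => by rw [Jminus_zero b c t hk, zero_mul])).symm
    rw [shrink]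
    have step : ∀ k ∈ Finset.range i,
        Jminus b c t i k * Jpow a b c t (n + 1) k j
          = ∑ m ∈ Finset.range N, Jminus b c t i k * (Jmat a b c t k m * Jpow a b c t n m j) := by
      intro k hk
      rw [Finset.mem_range] at hk
      have e : Jpow a b c t (n + 1) k j
          = ∑ m ∈ Finset.range N, Jmat a b c t k m * Jpow a b c t n m j := by
        rw [Jpow_succ]
        exact sum_ext (by omega)
          (fun m hm => by rw [Jmat_upper a b c t (by omega), zero_mul])
      rw [e, Finset.mul_sum]
    rw [Finset.sum_congr rfl step]
    refine sum_ext (by omega) (fun k hk => ?_)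
    refine Finset.sum_eq_zero fun m _ => ?_
    rw [Jminus_zero b c t hk, zero_mul]
  rw [Finset.sum_sub_distrib, hRA, hRB]
  simp only [Finset.sum_add_distrib, Finset.sum_sub_distrib]
  have e14 : (∑ k ∈ Finset.range N, ∑ m ∈ Finset.range N,
        Jmat a b c t i k * (Jminus b c t k m * Jpow a b c t n m j))
      = ∑ k ∈ Finset.range N, ∑ m ∈ Finset.range N,
        Jmat a b c t i m * (Jminus b c t m k * Jpow a b c t n k j) :=
    Finset.sum_comm
  have e3 : (∑ k ∈ Finset.range N, ∑ m ∈ Finset.range N,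
        Jmat a b c t i k * (Jpow a b c t n k m * Jminus b c t m j))
      = ∑ k ∈ Finset.range N, ∑ m ∈ Finset.range N,
        Jmat a b c t i m * (Jpow a b c t n m k * Jminus b c t k j) :=
    Finset.sum_comm
  have e2 : (∑ k ∈ Finset.range N, ∑ m ∈ Finset.range N,
        Jminus b c t i m * (Jmat a b c t m k * Jpow a b c t n k j))
      = ∑ k ∈ Finset.range N, ∑ m ∈ Finset.range N,
        Jminus b c t i k * (Jmat a b c t k m * Jpow a b c t n m j) :=
    Finset.sum_comm
  rw [e14, e3, e2]
  ring

lemma rightMul : ∀ (n i j N : ℕ), i + n + 1 ≤ N →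
    Jpow a b c t (n + 1) i j
      = ∑ k ∈ Finset.range N, Jpow a b c t n i k * Jmat a b c t k j := by
  intro n
  induction n with
  | zero =>
    intro i j N hN
    rw [Jpow_succ]
    have h1 : ∑ k ∈ Finset.range N, Jpow a b c t 0 i k * Jmat a b c t k j
        = Jmat a b c t i j := by
      rw [Finset.sum_eq_single i]
      · simp [Jpow_zero]
      · intro k _ hk; simp [Jpow_zero, Ne.symm hk]
      · intro h; exact absurd (Finset.mem_range.2 (by omega)) h
    rw [h1]
    rcases le_or_gt j (i + 1) with hj | hj
    · rw [Finset.sum_eq_single j]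
      · simp [Jpow_zero]
      · intro k _ hk; simp [Jpow_zero, hk]
      · intro h; exact absurd (Finset.mem_range.2 (by omega)) h
    · rw [Jmat_upper a b c t hj]
      refine Finset.sum_eq_zero fun k hk => ?_
      rw [Finset.mem_range] at hk
      simp [Jpow_zero]
      omega
  | succ n ih =>
    intro i j N hN
    rw [Jpow_succ]
    have hrw : ∀ k ∈ Finset.range (i + 2),
        Jmat a b c t i k * Jpow a b c t (n + 1) k j
          = ∑ m ∈ Finset.range N, Jmat a b c t i k * (Jpow a b c t n k m * Jmat a b c t m j) := by
      intro k hk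
      rw [Finset.mem_range] at hk
      rw [ih k j N (by omega), Finset.mul_sum]
    rw [Finset.sum_congr rfl hrw, Finset.sum_comm]
    refine Finset.sum_congr rfl fun m _ => ?_
    rw [Jpow_succ, Finset.sum_mul]
    exact Finset.sum_congr rfl fun k _ => by ring

lemma lax
    (h : ∀ (u : ℝ) (i j : ℕ), HasDerivAt (fun s => Jmat a b c s i j)
      (bmul (Jmat a b c u) (Jminus b c u) i j - bmul (Jminus b c u) (Jmat a b c u) i j) u) :
    ∀ (n i j : ℕ), HasDerivAt (fun s => Jpow a b c s n i j)
      (∑ k ∈ Finset.range (i + n + 1),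
        (Jpow a b c t n i k * Jminus b c t k j - Jminus b c t i k * Jpow a b c t n k j)) t := by
  intro n
  induction n with
  | zero =>
    intro i j
    have hval : ∑ k ∈ Finset.range (i + 0 + 1),
        (Jpow a b c t 0 i k * Jminus b c t k j - Jminus b c t i k * Jpow a b c t 0 k j) = 0 := by
      rw [Finset.sum_sub_distrib]
      have h1 : ∑ k ∈ Finset.range (i + 0 + 1), Jpow a b c t 0 i k * Jminus b c t k j
          = Jminus b c t i j := by
        rw [Finset.sum_eq_single i]
        · simp [Jpow_zero]
        · intro k _ hk; simp [Jpow_zero, Ne.symm hk]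
        · intro hcon; exact absurd (Finset.mem_range.2 (by omega)) hcon
      have h2 : ∑ k ∈ Finset.range (i + 0 + 1), Jminus b c t i k * Jpow a b c t 0 k j
          = Jminus b c t i j := by
        rcases le_or_gt j i with hj | hj
        · rw [Finset.sum_eq_single j]
          · simp [Jpow_zero]
          · intro k _ hk; simp [Jpow_zero, hk]
          · intro hcon; exact absurd (Finset.mem_range.2 (by omega)) hcon
        · rw [Jminus_zero b c t (by omega)]
          refine Finset.sum_eq_zero fun k hk => ?_
          rw [Finset.mem_range] at hk
          simp [Jpow_zero]
          omega
      rw [h1, h2, sub_self]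
    rw [hval]
    have : (fun s => Jpow a b c s 0 i j) = fun _ => (if i = j then (1:ℂ) else 0) := rfl
    rw [this]
    exact hasDerivAt_const t _
  | succ n ih =>
    intro i j
    have hd : HasDerivAt
        (fun s => ∑ k ∈ Finset.range (i + 2), Jmat a b c s i k * Jpow a b c s n k j)
        (∑ k ∈ Finset.range (i + 2),
          ((bmul (Jmat a b c t) (Jminus b c t) i k - bmul (Jminus b c t) (Jmat a b c t) i k)
              * Jpow a b c t n k j
            + Jmat a b c t i k * ∑ m ∈ Finset.range (k + n + 1),
                (Jpow a b c t n k m * Jminus b c t m j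
                  - Jminus b c t k m * Jpow a b c t n m j))) t :=
      HasDerivAt.fun_sum fun k _ => (h t i k).mul (ih k j)
    rw [step_algebra a b c t n i j] at hd
    exact hd

lemma Jmat_eq_Jminus_low {k q : ℕ} (hk : 2 ≤ k) (hq : q ≤ 1) :
    Jmat a b c t k q = Jminus b c t k q := by
  unfold Jmat Jminus
  rw [if_neg (by omega), if_neg (by omega)]

lemma block1 (n : ℕ) :
    blk (Jpow a b c t (n + 1)) 0 0 =
      blk (Jpow a b c t n) 0 0 * blk (Jmat a b c t) 0 0
        + blk (Jpow a b c t n) 0 1 * blk (Jminus b c t) 1 0 := by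
  ext p q
  have hp : (p : ℕ) ≤ 1 := Fin.is_le p
  have hq : (q : ℕ) ≤ 1 := Fin.is_le q
  simp only [blk, Matrix.add_apply, Matrix.mul_apply, Matrix.of_apply, Fin.sum_univ_two,
    Fin.val_zero, Fin.val_one, Nat.mul_zero, Nat.zero_add, Nat.mul_one, Nat.add_zero]
  rw [rightMul a b c t n p q (n + 5) (by omega)]
  have htr : ∑ k ∈ Finset.range (n + 5), Jpow a b c t n p k * Jmat a b c t k q
      = ∑ k ∈ Finset.range 4, Jpow a b c t n p k * Jmat a b c t k q :=
    (sum_ext (by omega) (fun k hk => by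
      rw [Jmat_lower a b c t (by omega), mul_zero])).symm
  rw [htr]
  rw [Finset.sum_range_succ, Finset.sum_range_succ, Finset.sum_range_succ,
    Finset.sum_range_succ, Finset.sum_range_zero]
  rw [Jmat_eq_Jminus_low a b c t (k := 2) (by omega) hq,
    Jmat_eq_Jminus_low a b c t (k := 3) (by omega) hq]
  ring

end KT

/-- For every `n`, `(J^{n+1})₁₁ = (Jⁿ)₁₁ J₁₁ + (Jⁿ)₁₂ (J_-)₂₁`; consequently, if
`J̇ = [J, J_-]`, then
`d/dt (Jⁿ)₁₁ = (J^{n+1})₁₁ − (Jⁿ)₁₁ B₁ + [(Jⁿ)₁₁, (J_-)₁₁]` with `B₁ = J₁₁`. -/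
theorem block_identity_and_evolution (a b c : ℕ → ℝ → ℂ)
    (hb0 : ∀ t, b 0 t = 0) (hc0 : ∀ t, c 0 t = 0) :
    (∀ t : ℝ, ∀ n : ℕ,
      blk (Jpow a b c t (n + 1)) 0 0 =
        blk (Jpow a b c t n) 0 0 * blk (Jmat a b c t) 0 0
          + blk (Jpow a b c t n) 0 1 * blk (Jminus b c t) 1 0) ∧
    ((∀ t : ℝ, ∀ i j : ℕ,
        HasDerivAt (fun s => Jmat a b c s i j)
          (bmul (Jmat a b c t) (Jminus b c t) i j
            - bmul (Jminus b c t) (Jmat a b c t) i j) t) →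
      ∀ n : ℕ, ∀ t : ℝ, ∀ p q : Fin 2,
        HasDerivAt (fun s => blk (Jpow a b c s n) 0 0 p q)
          ((blk (Jpow a b c t (n + 1)) 0 0
            - blk (Jpow a b c t n) 0 0 * blk (Jmat a b c t) 0 0
            + (blk (Jpow a b c t n) 0 0 * blk (Jminus b c t) 0 0
              - blk (Jminus b c t) 0 0 * blk (Jpow a b c t n) 0 0)) p q) t) := by
  constructor
  · intro t n
    exact KT.block1 a b c t n
  · intro h n t p q
    have hp : (p : ℕ) ≤ 1 := Fin.is_le p
    have hq : (q : ℕ) ≤ 1 := Fin.is_le q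
    have hfun : (fun s => blk (Jpow a b c s n) 0 0 p q)
        = fun s => Jpow a b c s n (p : ℕ) (q : ℕ) := by
      funext s
      simp [blk]
    rw [hfun]
    have hD := KT.lax a b c t h n (p : ℕ) (q : ℕ)
    convert hD using 1
    rw [KT.block1 a b c t n]
    simp only [Matrix.sub_apply, Matrix.add_apply, Matrix.mul_apply, Fin.sum_univ_two, blk,
      Matrix.of_apply, Fin.val_zero, Fin.val_one, Nat.mul_zero, Nat.zero_add, Nat.mul_one,
      Nat.add_zero]
    have hpad : ∑ k ∈ Finset.range ((p : ℕ) + n + 1),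
        (Jpow a b c t n (p : ℕ) k * Jminus b c t k (q : ℕ)
          - Jminus b c t (p : ℕ) k * Jpow a b c t n k (q : ℕ))
        = ∑ k ∈ Finset.range (n + 5),
        (Jpow a b c t n (p : ℕ) k * Jminus b c t k (q : ℕ)
          - Jminus b c t (p : ℕ) k * Jpow a b c t n k (q : ℕ)) := by
      refine KT.sum_ext (by omega) (fun k hk => ?_)
      rw [KT.Jpow_upper a b c t n (by omega),
        KT.Jminus_zero b c t (show (p : ℕ) ≤ k by omega)]
      ring
    rw [hpad, Finset.sum_sub_distrib]
    have h1 : ∑ k ∈ Finset.range (n + 5), Jpow a b c t n (p : ℕ) k * Jminus b c t k (q : ℕ)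
        = ∑ k ∈ Finset.range 4, Jpow a b c t n (p : ℕ) k * Jminus b c t k (q : ℕ) :=
      (KT.sum_ext (by omega) (fun k hk => by
        rw [KT.Jminus_lower b c t (by omega), mul_zero])).symm
    have h2 : ∑ k ∈ Finset.range (n + 5), Jminus b c t (p : ℕ) k * Jpow a b c t n k (q : ℕ)
        = ∑ k ∈ Finset.range 2, Jminus b c t (p : ℕ) k * Jpow a b c t n k (q : ℕ) :=
      (KT.sum_ext (by omega) (fun k hk => by
        rw [KT.Jminus_zero b c t (show (p : ℕ) ≤ k by omega), zero_mul])).symm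
    rw [h1, h2]
    rw [Finset.sum_range_succ, Finset.sum_range_succ, Finset.sum_range_succ,
      Finset.sum_range_succ, Finset.sum_range_zero]
    rw [Finset.sum_range_succ, Finset.sum_range_succ, Finset.sum_range_zero]
    ring
end
end

section
/- Let J be a bounded operator on ℓ² with ‖J‖ ≤ K, and define R_J(z) = Σ_{n≥0} (J^n)_{11}/z^{n+1} for |z| > ‖J‖ (the leading 2×2 block of the resolvent (zI − J)^{-1}). Then the following are equivalent: (b) for all n ≥ 0, d/dt (J^n)_{11} = (J^{n+1})_{11} − (J^n)_{11} B_1 + [(J^n)_{11}, (J_-)_{11}]; (c) for all |z| > ‖J‖, Ṙ_J(z) = R_J(z)(zI₂ − B_1) − I₂ + [R_J(z), (J_-)_{11}]. -/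
open Finset

noncomputable section

/-- The leading 2×2 block of the resolvent:
`R_J(z) = Σ_{n≥0} (Jⁿ)₁₁ / z^{n+1}`. -/
def Rfun (a b c : ℕ → ℝ → ℂ) (z : ℂ) (t : ℝ) : Matrix (Fin 2) (Fin 2) ℂ :=
  Matrix.of fun p q : Fin 2 => ∑' n : ℕ, blk (Jpow a b c t n) 0 0 p q / z ^ (n + 1)


open MeasureTheory Filter Real Topology
set_option maxHeartbeats 1000000

lemma summable_geom_aux {K r : ℝ} (hK0 : 0 ≤ K) (hr : K < r) (C : ℝ) :
    Summable (fun n : ℕ => C * (K / r) ^ n) :=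
  ((summable_geometric_of_lt_one (div_nonneg hK0 ((le_of_lt (lt_of_le_of_lt hK0 hr))))
    ((div_lt_one (lt_of_le_of_lt hK0 hr)).2 hr))).mul_left C

lemma integral_exp_int (k : ℤ) :
    (∫ θ in (0:ℝ)..(2*π), Complex.exp (k * θ * Complex.I)) =
      if k = 0 then (2*π : ℂ) else 0 := by
  rcases eq_or_ne k 0 with hk | hk
  · simp [hk]
  · have hc : (k : ℂ) * Complex.I ≠ 0 := by
      simp [Complex.I_ne_zero, Int.cast_eq_zero, hk]
    rw [if_neg hk]
    have : ∀ θ : ℝ, (k : ℂ) * θ * Complex.I = ((k : ℂ) * Complex.I) * θ := by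
      intro θ; ring
    simp_rw [this]
    rw [integral_exp_mul_complex hc]
    have h1 : Complex.exp ((k : ℂ) * Complex.I * ((2*π : ℝ) : ℂ)) = 1 := by
      push_cast
      rw [show (k : ℂ) * Complex.I * (2*(π:ℂ)) = (k : ℂ) * (2 * (π:ℂ) * Complex.I) by ring]
      exact Complex.exp_int_mul_two_pi_mul_I k
    rw [h1]
    simp

lemma norm_z_pow {r : ℝ} (hr0 : 0 < r) (θ : ℝ) (m : ℕ) :
    ‖((r:ℂ) * Complex.exp (θ * Complex.I)) ^ m‖ = r ^ m := by
  rw [norm_pow, norm_mul]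
  simp [Complex.norm_exp, abs_of_pos hr0]

lemma z_pow_eq {r : ℝ} (θ : ℝ) (m : ℕ) :
    ((r:ℂ) * Complex.exp (θ * Complex.I)) ^ m
      = (r:ℂ) ^ m * Complex.exp ((m : ℕ) * θ * Complex.I) := by
  rw [mul_pow, ← Complex.exp_nat_mul]
  ring_nf

lemma coeff_extract {K r : ℝ} (hK0 : 0 ≤ K) (hr : K < r)
    (c : ℕ → ℂ) (M : ℝ) (hc : ∀ m, ‖c m‖ ≤ M * K ^ m) (n : ℕ) :
    (∫ θ in (0:ℝ)..(2*π),
        (∑' m : ℕ, c m / ((r:ℂ) * Complex.exp (θ * Complex.I)) ^ (m+1)) *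
          Complex.exp (((n:ℂ)+1) * θ * Complex.I))
      = (2*π : ℂ) * c n / (r:ℂ) ^ (n+1) := by
  have hr0 : 0 < r := lt_of_le_of_lt hK0 hr
  set z : ℝ → ℂ := fun θ => (r:ℂ) * Complex.exp (θ * Complex.I) with hz
  have hzne : ∀ θ m, (z θ) ^ (m+1) ≠ 0 := by
    intro θ m
    apply pow_ne_zero
    simp [hz, Complex.exp_ne_zero, ne_of_gt hr0]
  -- the term function
  set F : ℕ → ℝ → ℂ := fun m θ => c m / (z θ) ^ (m+1) * Complex.exp (((n:ℂ)+1) * θ * Complex.I)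
    with hF
  have hFnorm : ∀ m θ, ‖F m θ‖ = ‖c m‖ / r ^ (m+1) := by
    intro m θ
    rw [hF]
    simp only [norm_mul, norm_div, norm_z_pow hr0]
    have : ‖Complex.exp (((n:ℂ)+1) * θ * Complex.I)‖ = 1 := by
      rw [Complex.norm_exp]
      simp
    rw [this, mul_one]
    exact congrArg (‖c m‖ / ·) (norm_z_pow hr0 θ (m+1))
  have hFbound : ∀ m θ, ‖F m θ‖ ≤ (M / r) * (K / r) ^ m := by
    intro m θ
    rw [hFnorm]
    rw [div_pow, pow_succ]
    have h1 : ‖c m‖ / (r ^ m * r) ≤ (M * K ^ m) / (r ^ m * r) := by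
      apply div_le_div_of_nonneg_right (hc m) ?_ |>.trans_eq rfl
      positivity
    calc ‖c m‖ / (r ^ m * r) ≤ (M * K ^ m) / (r ^ m * r) := h1
      _ = M / r * (K ^ m / r ^ m) := by ring
  have hFsummable : ∀ θ, Summable (fun m => F m θ) := by
    intro θ
    apply Summable.of_norm_bounded (summable_geom_aux hK0 hr (M/r))
    exact fun m => hFbound m θ
  have hFcont : ∀ m, Continuous (F m) := by
    intro m
    apply Continuous.mul
    · apply Continuous.div continuous_const
      · exact (continuous_const.mul ((Complex.continuous_ofReal.mul continuous_const).cexp)).pow _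
      · exact fun θ => hzne θ m
    · exact ((continuous_const.mul Complex.continuous_ofReal).mul continuous_const).cexp
  -- swap sum and integral
  have hswap : HasSum (fun m => ∫ θ in (0:ℝ)..(2*π), F m θ)
      (∫ θ in (0:ℝ)..(2*π), ∑' m, F m θ) := by
    apply intervalIntegral.hasSum_integral_of_dominated_convergence
      (fun m _ => (M / r) * (K / r) ^ m)
    · exact fun m => (hFcont m).aestronglyMeasurable
    · exact fun m => Filter.Eventually.of_forall fun θ _ => hFbound m θ
    · exact Filter.Eventually.of_forall fun θ _ => summable_geom_aux hK0 hr (M/r)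
    · exact intervalIntegrable_const
    · exact Filter.Eventually.of_forall fun θ _ => (hFsummable θ).hasSum
  -- compute each integral
  have hre : ∀ m θ, F m θ = (c m / (r:ℂ)^(m+1)) *
      Complex.exp ((((n:ℤ) - m : ℤ) : ℂ) * θ * Complex.I) := by
    intro m θ
    have key : Complex.exp ((((n:ℤ) - m : ℤ) : ℂ) * θ * Complex.I) *
        Complex.exp (((m+1 : ℕ) : ℂ) * θ * Complex.I) = Complex.exp (((n:ℂ)+1) * θ * Complex.I) := by
      rw [← Complex.exp_add]
      congr 1
      push_cast
      ring
    rw [hF]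
    simp only [hz]
    rw [z_pow_eq, ← key]
    have h1 : ((r:ℂ))^(m+1) ≠ 0 := pow_ne_zero _ (by exact_mod_cast ne_of_gt hr0)
    field_simp
  have hint : ∀ m, (∫ θ in (0:ℝ)..(2*π), F m θ)
      = if m = n then (2*π : ℂ) * c n / (r:ℂ) ^ (n+1) else 0 := by
    intro m
    simp_rw [hre m]
    rw [intervalIntegral.integral_const_mul, integral_exp_int ((n:ℤ) - m)]
    rcases eq_or_ne m n with h | h
    · subst h
      simp only [sub_self, if_pos rfl]
      ring_nf
      simp [mul_comm, mul_div_assoc]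
      ring
    · have : (n:ℤ) - m ≠ 0 := by omega
      simp [this, h]
  have h2 : HasSum (fun m => if m = n then (2*π : ℂ) * c n / (r:ℂ) ^ (n+1) else 0)
      (∫ θ in (0:ℝ)..(2*π), ∑' m, F m θ) := by
    simpa only [hint] using hswap
  have h3 := (hasSum_ite_eq n ((2*π : ℂ) * c n / (r:ℂ) ^ (n+1))).unique h2
  rw [h3]
  apply intervalIntegral.integral_congr
  intro θ _
  exact (tsum_mul_right).symm

lemma key_backward (A G : ℕ → ℝ → ℂ) (K : ℝ) (hK1 : 1 ≤ K)
    (hA : ∀ m s, ‖A m s‖ ≤ K ^ m) (hG : ∀ m s, ‖G m s‖ ≤ 7 * K ^ (m+1))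
    (H : ∀ z : ℂ, K < ‖z‖ → ∀ t : ℝ,
      HasDerivAt (fun s => ∑' m, A m s / z ^ (m+1)) (∑' m, G m t / z ^ (m+1)) t)
    (n : ℕ) (t : ℝ) : HasDerivAt (A n) (G n t) t := by
  have hK0 : 0 ≤ K := le_trans zero_le_one hK1
  set r : ℝ := K + 1 with hrdef
  have hr : K < r := by simp [hrdef]
  have hr0 : 0 < r := lt_of_le_of_lt hK0 hr
  have hrC : ((r:ℂ)) ≠ 0 := by exact_mod_cast ne_of_gt hr0
  set z : ℝ → ℂ := fun θ => (r:ℂ) * Complex.exp (θ * Complex.I) with hzdef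
  have hznorm : ∀ θ, ‖z θ‖ = r := by
    intro θ
    have h := norm_z_pow hr0 θ 1
    rw [pow_one, pow_one] at h
    exact h
  have hzK : ∀ θ, K < ‖z θ‖ := fun θ => (hznorm θ).symm ▸ hr
  have hzne : ∀ θ m, (z θ) ^ (m+1) ≠ 0 := by
    intro θ m
    apply pow_ne_zero
    simp [hzdef, Complex.exp_ne_zero, ne_of_gt hr0]
  have hGbd : ∀ m (s : ℝ), ‖G m s‖ ≤ (7*K) * K ^ m := by
    intro m s
    calc ‖G m s‖ ≤ 7 * K ^ (m+1) := hG m s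
      _ = (7*K) * K ^ m := by ring
  have hAbd : ∀ m (s : ℝ), ‖A m s‖ ≤ 1 * K ^ m := fun m s => by
    simpa using hA m s
  -- термwise norm bounds of the series
  have htermA : ∀ (s : ℝ) θ m, ‖A m s / (z θ) ^ (m+1)‖ ≤ (1/r) * (K/r) ^ m := by
    intro s θ m
    rw [norm_div, norm_pow, hznorm]
    rw [div_pow]
    calc ‖A m s‖ / r ^ (m+1) ≤ K ^ m / r ^ (m+1) := by
          gcongr
          exact hA m s
      _ = 1/r * (K ^ m / r ^ m) := by rw [pow_succ]; field_simp
  have htermG : ∀ (s : ℝ) θ m, ‖G m s / (z θ) ^ (m+1)‖ ≤ (7*K/r) * (K/r) ^ m := by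
    intro s θ m
    rw [norm_div, norm_pow, hznorm, div_pow]
    calc ‖G m s‖ / r ^ (m+1) ≤ ((7*K) * K ^ m) / r ^ (m+1) := by
          gcongr
          exact hGbd m s
      _ = 7*K/r * (K ^ m / r ^ m) := by rw [pow_succ]; field_simp
  have hsumA : ∀ (s : ℝ) θ, Summable (fun m => A m s / (z θ) ^ (m+1)) := fun s θ =>
    Summable.of_norm_bounded (summable_geom_aux hK0 hr (1/r)) (htermA s θ)
  have hsumG : ∀ (s : ℝ) θ, Summable (fun m => G m s / (z θ) ^ (m+1)) := fun s θ =>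
    Summable.of_norm_bounded (summable_geom_aux hK0 hr (7*K/r)) (htermG s θ)
  set M₀ : ℝ := ∑' m : ℕ, (7*K/r) * (K/r) ^ m with hM₀
  have hM₀0 : 0 ≤ M₀ := tsum_nonneg (fun m => by positivity)
  set Rf : ℝ → ℝ → ℂ := fun s θ => ∑' m, A m s / (z θ) ^ (m+1) with hRf
  set Gf : ℝ → ℝ → ℂ := fun s θ => ∑' m, G m s / (z θ) ^ (m+1) with hGf
  have hder : ∀ θ (s' : ℝ), HasDerivAt (fun s => Rf s θ) (Gf s' θ) s' :=
    fun θ s' => H (z θ) (hzK θ) s'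
  have hGfbd : ∀ (s : ℝ) θ, ‖Gf s θ‖ ≤ M₀ := by
    intro s θ
    have hsn : Summable fun m => ‖G m s / (z θ) ^ (m+1)‖ :=
      Summable.of_nonneg_of_le (fun m => norm_nonneg _) (htermG s θ)
        (summable_geom_aux hK0 hr (7*K/r))
    calc ‖Gf s θ‖ ≤ ∑' m, ‖G m s / (z θ) ^ (m+1)‖ := norm_tsum_le_tsum_norm hsn
      _ ≤ M₀ := Summable.tsum_le_tsum (htermG s θ) hsn (summable_geom_aux hK0 hr (7*K/r))
  have hlip : ∀ θ (s : ℝ), ‖Rf s θ - Rf t θ‖ ≤ M₀ * ‖s - t‖ := by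
    intro θ s
    exact Convex.norm_image_sub_le_of_norm_hasDerivWithin_le
      (f := fun s => Rf s θ) (f' := fun s' => Gf s' θ) (s := Set.univ)
      (fun x _ => (hder θ x).hasDerivWithinAt)
      (fun x _ => hGfbd x θ) convex_univ (Set.mem_univ t) (Set.mem_univ s)
  have hcontz : Continuous z :=
    continuous_const.mul ((Complex.continuous_ofReal.mul continuous_const).cexp)
  have hcontR : ∀ s : ℝ, Continuous fun θ => Rf s θ := by
    intro s
    apply continuous_tsum (u := fun m => 1/r * (K/r)^m)
    · intro m
      exact continuous_const.div (hcontz.pow _) (fun θ => hzne θ m)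
    · exact summable_geom_aux hK0 hr (1/r)
    · exact fun m θ => htermA s θ m
  have hcontG : Continuous fun θ => Gf t θ := by
    apply continuous_tsum (u := fun m => 7*K/r * (K/r)^m)
    · intro m
      exact continuous_const.div (hcontz.pow _) (fun θ => hzne θ m)
    · exact summable_geom_aux hK0 hr (7*K/r)
    · exact fun m θ => htermG t θ m
  set e : ℝ → ℂ := fun θ => Complex.exp (((n:ℂ)+1) * θ * Complex.I) with he
  have hconte : Continuous e :=
    ((continuous_const.mul Complex.continuous_ofReal).mul continuous_const).cexp
  have hcoeffA : ∀ s : ℝ, (∫ θ in (0:ℝ)..(2*π), Rf s θ * e θ)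
      = (2*π:ℂ) * A n s / (r:ℂ)^(n+1) :=
    fun s => coeff_extract hK0 hr (fun m => A m s) 1 (fun m => hAbd m s) n
  have hcoeffG : (∫ θ in (0:ℝ)..(2*π), Gf t θ * e θ)
      = (2*π:ℂ) * G n t / (r:ℂ)^(n+1) :=
    coeff_extract hK0 hr (fun m => G m t) (7*K) (fun m => hGbd m t) n
  set Φ : ℝ → ℂ := fun s => ∫ θ in (0:ℝ)..(2*π),
      (((s - t)⁻¹ • (Rf s θ - Rf t θ)) - Gf t θ) * e θ with hΦ
  have hintR : ∀ s : ℝ, IntervalIntegrable (fun θ => Rf s θ * e θ)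
      MeasureTheory.volume 0 (2*π) :=
    fun s => ((hcontR s).mul hconte).intervalIntegrable _ _
  have hintG : IntervalIntegrable (fun θ => Gf t θ * e θ) MeasureTheory.volume 0 (2*π) :=
    (hcontG.mul hconte).intervalIntegrable _ _
  have hΦeq : ∀ s : ℝ, Φ s = (s - t)⁻¹ • ((2*π:ℂ) * A n s / (r:ℂ)^(n+1)
      - (2*π:ℂ) * A n t / (r:ℂ)^(n+1)) - (2*π:ℂ) * G n t / (r:ℂ)^(n+1) := by
    intro s
    rw [hΦ]
    have hh : ∀ θ : ℝ, (((s - t)⁻¹ • (Rf s θ - Rf t θ)) - Gf t θ) * e θ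
        = (s - t)⁻¹ • (Rf s θ * e θ - Rf t θ * e θ) - Gf t θ * e θ := by
      intro θ; rw [sub_mul, smul_mul_assoc, sub_mul]
    simp_rw [hh]
    have h1 : IntervalIntegrable (fun θ => (s-t)⁻¹ • (Rf s θ * e θ - Rf t θ * e θ))
        MeasureTheory.volume 0 (2*π) := ((hintR s).sub (hintR t)).smul ((s - t)⁻¹ : ℝ)
    rw [intervalIntegral.integral_sub h1 hintG,
        intervalIntegral.integral_smul,
        intervalIntegral.integral_sub (hintR s) (hintR t),
        hcoeffA s, hcoeffA t, hcoeffG]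
  have hΦeq2 : ∀ s : ℝ, Φ s = (2*π:ℂ)/(r:ℂ)^(n+1)
      * ((s - t)⁻¹ • (A n s - A n t) - G n t) := by
    intro s
    rw [hΦeq s]
    simp only [Complex.real_smul, Complex.ofReal_inv]
    ring
  have hbound : ∀ᶠ s in nhdsWithin t {t}ᶜ, ∀ᵐ θ : ℝ, θ ∈ Set.uIoc (0:ℝ) (2*π) →
      ‖(((s - t)⁻¹ • (Rf s θ - Rf t θ)) - Gf t θ) * e θ‖ ≤ M₀ + M₀ := by
    filter_upwards [self_mem_nhdsWithin] with s hs
    apply Filter.Eventually.of_forall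
    intro θ _
    have hs' : s ≠ t := hs
    have hst : s - t ≠ 0 := sub_ne_zero.2 hs'
    have he1 : ‖e θ‖ = 1 := by
      rw [he, Complex.norm_exp]; simp
    rw [norm_mul, he1, mul_one]
    refine (norm_sub_le _ _).trans (add_le_add ?_ (hGfbd t θ))
    rw [norm_smul, Real.norm_eq_abs, abs_inv]
    calc |s-t|⁻¹ * ‖Rf s θ - Rf t θ‖ ≤ |s-t|⁻¹ * (M₀ * ‖s - t‖) := by
          gcongr
          exact hlip θ s
      _ = M₀ := by
          rw [Real.norm_eq_abs]
          field_simp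
  have hlim : ∀ᵐ θ : ℝ, θ ∈ Set.uIoc (0:ℝ) (2*π) →
      Filter.Tendsto (fun s => (((s - t)⁻¹ • (Rf s θ - Rf t θ)) - Gf t θ) * e θ)
        (nhdsWithin t {t}ᶜ) (nhds 0) := by
    apply Filter.Eventually.of_forall
    intro θ _
    have h1 := hasDerivAt_iff_tendsto_slope.mp (hder θ t)
    have h2 : (slope (fun s => Rf s θ) t) = fun s => (s - t)⁻¹ • (Rf s θ - Rf t θ) := by
      funext s; rw [slope_def_module]
    rw [h2] at h1
    have h3 : Filter.Tendsto (fun s => ((s - t)⁻¹ • (Rf s θ - Rf t θ)) - Gf t θ)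
        (nhdsWithin t {t}ᶜ) (nhds 0) := by
      simpa using h1.sub (tendsto_const_nhds (x := Gf t θ))
    simpa using h3.mul (tendsto_const_nhds (x := e θ))
  have hmeas : ∀ᶠ s in nhdsWithin t {t}ᶜ, MeasureTheory.AEStronglyMeasurable
      (fun θ => (((s - t)⁻¹ • (Rf s θ - Rf t θ)) - Gf t θ) * e θ)
      (MeasureTheory.volume.restrict (Set.uIoc 0 (2*π))) := by
    apply Filter.Eventually.of_forall
    intro s
    exact (((((hcontR s).sub (hcontR t)).const_smul ((s - t)⁻¹ : ℝ)).sub hcontG).mul hconte).aestronglyMeasurable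
  have htend : Filter.Tendsto Φ (nhdsWithin t {t}ᶜ) (nhds 0) := by
    have h0 : (∫ _ in (0:ℝ)..(2*π), (0:ℂ)) = 0 := by simp
    have hmain := intervalIntegral.tendsto_integral_filter_of_dominated_convergence
      (μ := MeasureTheory.volume)
      (F := fun s θ => (((s - t)⁻¹ • (Rf s θ - Rf t θ)) - Gf t θ) * e θ)
      (f := fun _ => (0:ℂ)) (fun _ => M₀ + M₀) hmeas hbound
      intervalIntegrable_const hlim
    rw [h0] at hmain
    exact hmain
  have hc0 : ((2*π:ℂ)/(r:ℂ)^(n+1)) ≠ 0 := by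
    apply div_ne_zero
    · have : (π:ℂ) ≠ 0 := by exact_mod_cast Real.pi_ne_zero
      exact mul_ne_zero two_ne_zero this
    · exact pow_ne_zero _ hrC
  have h4 : Filter.Tendsto (fun s => (2*π:ℂ)/(r:ℂ)^(n+1)
      * ((s - t)⁻¹ • (A n s - A n t) - G n t)) (nhdsWithin t {t}ᶜ) (nhds 0) :=
    Filter.Tendsto.congr hΦeq2 htend
  have h5 : Filter.Tendsto (fun s => (s - t)⁻¹ • (A n s - A n t) - G n t)
      (nhdsWithin t {t}ᶜ) (nhds 0) := by
    have h4' := h4.const_mul (((2*π:ℂ)/(r:ℂ)^(n+1)))⁻¹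
    rw [mul_zero] at h4'
    apply h4'.congr
    intro s
    exact inv_mul_cancel_left₀ hc0 _
  have h6 : Filter.Tendsto (fun s => (s - t)⁻¹ • (A n s - A n t))
      (nhdsWithin t {t}ᶜ) (nhds (G n t)) := by
    have := h5.add (tendsto_const_nhds (x := G n t))
    simpa using this
  rw [hasDerivAt_iff_tendsto_slope]
  have hslope : slope (A n) t = fun s => (s - t)⁻¹ • (A n s - A n t) :=
    funext fun s => slope_def_module _ _ _
  rw [hslope]
  exact h6

lemma key_forward (A G : ℕ → ℝ → ℂ) (K : ℝ) (hK1 : 1 ≤ K)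
    (hA : ∀ m s, ‖A m s‖ ≤ K ^ m) (hG : ∀ m s, ‖G m s‖ ≤ 7 * K ^ (m+1))
    (H : ∀ m (t : ℝ), HasDerivAt (A m) (G m t) t)
    (z : ℂ) (hz : K < ‖z‖) (t : ℝ) :
    HasDerivAt (fun s => ∑' m, A m s / z ^ (m+1)) (∑' m, G m t / z ^ (m+1)) t := by
  have hK0 : 0 ≤ K := le_trans zero_le_one hK1
  have hz0 : 0 < ‖z‖ := lt_of_le_of_lt hK0 hz
  have htermG : ∀ (s:ℝ) m, ‖G m s / z ^ (m+1)‖ ≤ (7*K/‖z‖) * (K/‖z‖)^m := by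
    intro s m
    rw [norm_div, norm_pow, div_pow]
    calc ‖G m s‖ / ‖z‖ ^ (m+1) ≤ (7 * K ^ (m+1)) / ‖z‖ ^ (m+1) := by
          gcongr
          exact hG m s
      _ = 7*K/‖z‖ * (K ^ m / ‖z‖ ^ m) := by rw [pow_succ, pow_succ]; field_simp
  have htermA : ∀ (s:ℝ) m, ‖A m s / z ^ (m+1)‖ ≤ (1/‖z‖) * (K/‖z‖)^m := by
    intro s m
    rw [norm_div, norm_pow, div_pow]
    calc ‖A m s‖ / ‖z‖ ^ (m+1) ≤ K ^ m / ‖z‖ ^ (m+1) := by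
          gcongr
          exact hA m s
      _ = 1/‖z‖ * (K ^ m / ‖z‖ ^ m) := by rw [pow_succ]; field_simp
  exact hasDerivAt_tsum (summable_geom_aux hK0 hz (7*K/‖z‖))
    (fun m y => (H m y).div_const _)
    (fun m y => htermG y m)
    (Summable.of_norm_bounded (summable_geom_aux hK0 hz (1/‖z‖)) (htermA t))
    t

section Concrete

variable (a b c : ℕ → ℝ → ℂ)

/-- derivative matrix appearing in the block evolution equations -/
def Gmat (n : ℕ) (t : ℝ) : Matrix (Fin 2) (Fin 2) ℂ :=
  blk (Jpow a b c t (n + 1)) 0 0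
    - blk (Jpow a b c t n) 0 0 * blk (Jmat a b c t) 0 0
    + (blk (Jpow a b c t n) 0 0 * blk (Jminus b c t) 0 0
      - blk (Jminus b c t) 0 0 * blk (Jpow a b c t n) 0 0)

lemma Jpow_one (t : ℝ) (i j : ℕ) (h : j < i + 2) :
    Jpow a b c t 1 i j = Jmat a b c t i j := by
  show (∑ k ∈ Finset.range (i + 2), Jmat a b c t i k * Jpow a b c t 0 k j) = _
  have : ∀ k, Jpow a b c t 0 k j = if k = j then 1 else 0 := fun k => rfl
  simp only [this, mul_ite, mul_one, mul_zero]
  rw [Finset.sum_ite_eq' (Finset.range (i+2)) j (fun k => Jmat a b c t i k)]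
  simp [Finset.mem_range.2 h]

variable {K : ℝ} (hK : ∀ t : ℝ, ∀ n i j : ℕ, ‖Jpow a b c t n i j‖ ≤ K ^ n)

include hK

lemma one_le_K : 1 ≤ K := by
  have h := hK 0 1 0 1
  rw [Jpow_one a b c 0 0 1 (by omega)] at h
  have : Jmat a b c 0 0 1 = 1 := by simp [Jmat]
  rw [this] at h
  simpa using h

lemma blkJpow_bound (s : ℝ) (m : ℕ) (p q : Fin 2) :
    ‖blk (Jpow a b c s m) 0 0 p q‖ ≤ K ^ m := by
  simp only [blk, Matrix.of_apply]
  exact hK s m _ _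

lemma blkJmat_bound (t : ℝ) (p q : Fin 2) :
    ‖blk (Jmat a b c t) 0 0 p q‖ ≤ K := by
  have h : blk (Jmat a b c t) 0 0 p q = Jpow a b c t 1 (2*0+(p:ℕ)) (2*0+(q:ℕ)) := by
    rw [Jpow_one a b c t _ _ (by omega)]
    rfl
  rw [h]
  simpa using hK t 1 (2*0+(p:ℕ)) (2*0+(q:ℕ))

lemma blkJminus_bound (t : ℝ) (p q : Fin 2) :
    ‖blk (Jminus b c t) 0 0 p q‖ ≤ K := by
  have hK0 : 0 ≤ K := le_trans zero_le_one (one_le_K a b c hK)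
  have hb1 : ‖(b 1 t : ℂ)‖ ≤ K := by
    have h : Jminus b c t 1 0 = Jmat a b c t 1 0 := by simp [Jminus, Jmat]
    have h2 := blkJmat_bound a b c hK t 1 0
    simp only [blk, Matrix.of_apply] at h2 ⊢
    simpa [Jmat] using h2
  fin_cases p <;> fin_cases q <;> simp [blk, Jminus] <;> first
    | exact hK0
    | simpa using hb1

lemma Gmat_bound (m : ℕ) (s : ℝ) (p q : Fin 2) :
    ‖Gmat a b c m s p q‖ ≤ 7 * K ^ (m + 1) := by
  have hK0 : 0 ≤ K := le_trans zero_le_one (one_le_K a b c hK)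
  have hmul : ∀ (M N : Matrix (Fin 2) (Fin 2) ℂ),
      (∀ p q, ‖M p q‖ ≤ K ^ m) → (∀ p q, ‖N p q‖ ≤ K) →
      ∀ p q : Fin 2, ‖(M * N) p q‖ ≤ 2 * K ^ (m+1) := by
    intro M N hM hN p q
    rw [Matrix.mul_apply, Fin.sum_univ_two]
    calc ‖M p 0 * N 0 q + M p 1 * N 1 q‖ ≤ ‖M p 0 * N 0 q‖ + ‖M p 1 * N 1 q‖ :=
          norm_add_le _ _
      _ = ‖M p 0‖ * ‖N 0 q‖ + ‖M p 1‖ * ‖N 1 q‖ := by rw [norm_mul, norm_mul]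
      _ ≤ K ^ m * K + K ^ m * K := by
          apply add_le_add <;> exact mul_le_mul (hM _ _) (hN _ _) (norm_nonneg _)
            (by positivity)
      _ = 2 * K ^ (m+1) := by rw [pow_succ]; ring
  have hmul' : ∀ (M N : Matrix (Fin 2) (Fin 2) ℂ),
      (∀ p q, ‖M p q‖ ≤ K) → (∀ p q, ‖N p q‖ ≤ K ^ m) →
      ∀ p q : Fin 2, ‖(M * N) p q‖ ≤ 2 * K ^ (m+1) := by
    intro M N hM hN p q
    rw [Matrix.mul_apply, Fin.sum_univ_two]
    calc ‖M p 0 * N 0 q + M p 1 * N 1 q‖ ≤ ‖M p 0 * N 0 q‖ + ‖M p 1 * N 1 q‖ :=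
          norm_add_le _ _
      _ = ‖M p 0‖ * ‖N 0 q‖ + ‖M p 1‖ * ‖N 1 q‖ := by rw [norm_mul, norm_mul]
      _ ≤ K * K ^ m + K * K ^ m := by
          apply add_le_add <;> exact mul_le_mul (hM _ _) (hN _ _) (norm_nonneg _)
            (by positivity)
      _ = 2 * K ^ (m+1) := by rw [pow_succ]; ring
  have h1 : ‖blk (Jpow a b c s (m+1)) 0 0 p q‖ ≤ K ^ (m+1) :=
    blkJpow_bound a b c hK s (m+1) p q
  have h2 := hmul (blk (Jpow a b c s m) 0 0) (blk (Jmat a b c s) 0 0)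
    (blkJpow_bound a b c hK s m) (blkJmat_bound a b c hK s) p q
  have h3 := hmul (blk (Jpow a b c s m) 0 0) (blk (Jminus b c s) 0 0)
    (blkJpow_bound a b c hK s m) (blkJminus_bound a b c hK s) p q
  have h4 := hmul' (blk (Jminus b c s) 0 0) (blk (Jpow a b c s m) 0 0)
    (blkJminus_bound a b c hK s) (blkJpow_bound a b c hK s m) p q
  simp only [Gmat, Matrix.sub_apply, Matrix.add_apply]
  calc ‖blk (Jpow a b c s (m+1)) 0 0 p q
        - (blk (Jpow a b c s m) 0 0 * blk (Jmat a b c s) 0 0) p q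
        + ((blk (Jpow a b c s m) 0 0 * blk (Jminus b c s) 0 0) p q
          - (blk (Jminus b c s) 0 0 * blk (Jpow a b c s m) 0 0) p q)‖
      ≤ ‖blk (Jpow a b c s (m+1)) 0 0 p q
        - (blk (Jpow a b c s m) 0 0 * blk (Jmat a b c s) 0 0) p q‖
        + ‖(blk (Jpow a b c s m) 0 0 * blk (Jminus b c s) 0 0) p q
          - (blk (Jminus b c s) 0 0 * blk (Jpow a b c s m) 0 0) p q‖ := norm_add_le _ _
    _ ≤ (‖blk (Jpow a b c s (m+1)) 0 0 p q‖
        + ‖(blk (Jpow a b c s m) 0 0 * blk (Jmat a b c s) 0 0) p q‖)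
        + (‖(blk (Jpow a b c s m) 0 0 * blk (Jminus b c s) 0 0) p q‖
          + ‖(blk (Jminus b c s) 0 0 * blk (Jpow a b c s m) 0 0) p q‖) :=
        add_le_add (norm_sub_le _ _) (norm_sub_le _ _)
    _ ≤ (K ^ (m+1) + 2 * K ^ (m+1)) + (2 * K ^ (m+1) + 2 * K ^ (m+1)) := by
        exact add_le_add (add_le_add h1 h2) (add_le_add h3 h4)
    _ = 7 * K ^ (m+1) := by ring

end Concrete

section Algebra

lemma summable_pow_div {f : ℕ → ℂ} {z : ℂ} {K C : ℝ} (hK0 : 0 ≤ K) (hz : K < ‖z‖)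
    (hC : 0 ≤ C) (h : ∀ n, ‖f n‖ ≤ C * K ^ n) : Summable fun n => f n / z ^ (n+1) := by
  have hz' : K < ‖z‖ := hz
  have hz0 : 0 < ‖z‖ := lt_of_le_of_lt hK0 hz'
  apply Summable.of_norm_bounded (summable_geom_aux hK0 hz' (C/‖z‖))
  intro n
  rw [norm_div, norm_pow, div_pow]
  calc ‖f n‖ / ‖z‖ ^ (n+1) ≤ (C * K ^ n) / ‖z‖ ^ (n+1) := by
        gcongr
        exact h n
    _ = C/‖z‖ * (K ^ n / ‖z‖ ^ n) := by rw [pow_succ]; field_simp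

lemma tsum_shift' {f : ℕ → ℂ} {z : ℂ} (hz : z ≠ 0)
    (hf : Summable (fun m => f m / z ^ (m+1))) :
    ∑' m, f (m+1) / z ^ (m+1) = z * ∑' m, f m / z ^ (m+1) - f 0 := by
  have hshift : Summable (fun m => f (m+1) / z ^ (m+2)) :=
    hf.comp_injective (add_left_injective 1)
  have h0 := Summable.tsum_eq_zero_add hf
  have h1 : ∀ m : ℕ, f (m+1) / z ^ (m+2) = z⁻¹ * (f (m+1) / z ^ (m+1)) := by
    intro m
    rw [pow_succ, ← div_div, div_eq_inv_mul (f (m+1) / z ^ (m+1))]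
  have h2 : ∑' m, f (m+1) / z ^ (m+2) = z⁻¹ * ∑' m, f (m+1) / z ^ (m+1) := by
    rw [← tsum_mul_left]
    exact tsum_congr h1
  rw [h2] at h0
  rw [h0]
  field_simp
  ring

lemma tsum_entry_mul {A : ℕ → Matrix (Fin 2) (Fin 2) ℂ} {z : ℂ}
    (hs : ∀ p q : Fin 2, Summable fun m => A m p q / z ^ (m+1))
    (Mc : Matrix (Fin 2) (Fin 2) ℂ) (p q : Fin 2) :
    ∑' m, (A m * Mc) p q / z ^ (m+1)
      = ((Matrix.of fun p q : Fin 2 => ∑' m, A m p q / z ^ (m+1)) * Mc) p q := by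
  simp only [Matrix.mul_apply, Fin.sum_univ_two, Matrix.of_apply]
  have h1 : ∀ m : ℕ, (A m p 0 * Mc 0 q + A m p 1 * Mc 1 q) / z ^ (m+1)
      = (A m p 0 / z ^ (m+1)) * Mc 0 q + (A m p 1 / z ^ (m+1)) * Mc 1 q := by
    intro m; ring
  rw [tsum_congr h1, Summable.tsum_add ((hs p 0).mul_right _) ((hs p 1).mul_right _),
    tsum_mul_right, tsum_mul_right]

lemma tsum_entry_mul_left {A : ℕ → Matrix (Fin 2) (Fin 2) ℂ} {z : ℂ}
    (hs : ∀ p q : Fin 2, Summable fun m => A m p q / z ^ (m+1))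
    (Mc : Matrix (Fin 2) (Fin 2) ℂ) (p q : Fin 2) :
    ∑' m, (Mc * A m) p q / z ^ (m+1)
      = (Mc * (Matrix.of fun p q : Fin 2 => ∑' m, A m p q / z ^ (m+1))) p q := by
  simp only [Matrix.mul_apply, Fin.sum_univ_two, Matrix.of_apply]
  have h1 : ∀ m : ℕ, (Mc p 0 * A m 0 q + Mc p 1 * A m 1 q) / z ^ (m+1)
      = Mc p 0 * (A m 0 q / z ^ (m+1)) + Mc p 1 * (A m 1 q / z ^ (m+1)) := by
    intro m; ring
  rw [tsum_congr h1, Summable.tsum_add ((hs 0 q).mul_left _) ((hs 1 q).mul_left _),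
    tsum_mul_left, tsum_mul_left]

end Algebra

section MainIdentity

variable (a b c : ℕ → ℝ → ℂ) {K : ℝ}
  (hK : ∀ t : ℝ, ∀ n i j : ℕ, ‖Jpow a b c t n i j‖ ≤ K ^ n)

include hK

lemma tsum_G_eq (z : ℂ) (hz : K < ‖z‖) (t : ℝ) (p q : Fin 2) :
    ∑' n, Gmat a b c n t p q / z ^ (n+1)
      = (Rfun a b c z t * (z • (1 : Matrix (Fin 2) (Fin 2) ℂ) - blk (Jmat a b c t) 0 0)
          - 1
          + (Rfun a b c z t * blk (Jminus b c t) 0 0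
            - blk (Jminus b c t) 0 0 * Rfun a b c z t)) p q := by
  have hK1 : 1 ≤ K := one_le_K a b c hK
  have hK0 : 0 ≤ K := le_trans zero_le_one hK1
  have hzn : z ≠ 0 := by
    intro h0
    rw [h0] at hz
    simp at hz
    linarith
  set B := blk (Jmat a b c t) 0 0 with hB
  set Jm := blk (Jminus b c t) 0 0 with hJm
  have hR : Rfun a b c z t
      = Matrix.of (fun p q : Fin 2 => ∑' n, blk (Jpow a b c t n) 0 0 p q / z ^ (n+1)) := rfl
  -- summabilities
  have sA : ∀ p q : Fin 2, Summable fun n => blk (Jpow a b c t n) 0 0 p q / z ^ (n+1) := by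
    intro p q
    apply summable_pow_div hK0 hz zero_le_one
    intro n
    simpa using blkJpow_bound a b c hK t n p q
  have sShift : Summable fun n => blk (Jpow a b c t (n+1)) 0 0 p q / z ^ (n+1) := by
    apply summable_pow_div hK0 hz hK0
    intro n
    have := blkJpow_bound a b c hK t (n+1) p q
    rw [pow_succ] at this
    calc ‖blk (Jpow a b c t (n+1)) 0 0 p q‖ ≤ K ^ n * K := this
      _ = K * K ^ n := by ring
  have hmulbd : ∀ (M N : Matrix (Fin 2) (Fin 2) ℂ) (n : ℕ),
      (∀ p q, ‖M p q‖ ≤ K ^ n) → (∀ p q, ‖N p q‖ ≤ K) →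
      ∀ p q : Fin 2, ‖(M * N) p q‖ ≤ 2 * K * K ^ n := by
    intro M N n hM hN p q
    rw [Matrix.mul_apply, Fin.sum_univ_two]
    calc ‖M p 0 * N 0 q + M p 1 * N 1 q‖ ≤ ‖M p 0‖ * ‖N 0 q‖ + ‖M p 1‖ * ‖N 1 q‖ := by
          refine (norm_add_le _ _).trans ?_
          rw [norm_mul, norm_mul]
      _ ≤ K ^ n * K + K ^ n * K := add_le_add
          (mul_le_mul (hM _ _) (hN _ _) (norm_nonneg _) (by positivity))
          (mul_le_mul (hM _ _) (hN _ _) (norm_nonneg _) (by positivity))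
      _ = 2 * K * K ^ n := by ring
  have hmulbd' : ∀ (M N : Matrix (Fin 2) (Fin 2) ℂ) (n : ℕ),
      (∀ p q, ‖M p q‖ ≤ K) → (∀ p q, ‖N p q‖ ≤ K ^ n) →
      ∀ p q : Fin 2, ‖(M * N) p q‖ ≤ 2 * K * K ^ n := by
    intro M N n hM hN p q
    rw [Matrix.mul_apply, Fin.sum_univ_two]
    calc ‖M p 0 * N 0 q + M p 1 * N 1 q‖ ≤ ‖M p 0‖ * ‖N 0 q‖ + ‖M p 1‖ * ‖N 1 q‖ := by
          refine (norm_add_le _ _).trans ?_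
          rw [norm_mul, norm_mul]
      _ ≤ K * K ^ n + K * K ^ n := add_le_add
          (mul_le_mul (hM _ _) (hN _ _) (norm_nonneg _) hK0)
          (mul_le_mul (hM _ _) (hN _ _) (norm_nonneg _) hK0)
      _ = 2 * K * K ^ n := by ring
  have sAB : Summable fun n => (blk (Jpow a b c t n) 0 0 * B) p q / z ^ (n+1) :=
    summable_pow_div hK0 hz (by positivity) (fun n =>
      hmulbd _ _ n (blkJpow_bound a b c hK t n) (blkJmat_bound a b c hK t) p q)
  have sAJ : Summable fun n => (blk (Jpow a b c t n) 0 0 * Jm) p q / z ^ (n+1) :=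
    summable_pow_div hK0 hz (by positivity) (fun n =>
      hmulbd _ _ n (blkJpow_bound a b c hK t n) (blkJminus_bound a b c hK t) p q)
  have sJA : Summable fun n => (Jm * blk (Jpow a b c t n) 0 0) p q / z ^ (n+1) :=
    summable_pow_div hK0 hz (by positivity) (fun n =>
      hmulbd' _ _ n (blkJminus_bound a b c hK t) (blkJpow_bound a b c hK t n) p q)
  -- expand the term
  have hterm : ∀ n : ℕ, Gmat a b c n t p q / z ^ (n+1)
      = blk (Jpow a b c t (n+1)) 0 0 p q / z ^ (n+1)
        - (blk (Jpow a b c t n) 0 0 * B) p q / z ^ (n+1)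
        + ((blk (Jpow a b c t n) 0 0 * Jm) p q / z ^ (n+1)
          - (Jm * blk (Jpow a b c t n) 0 0) p q / z ^ (n+1)) := by
    intro n
    simp only [Gmat, Matrix.sub_apply, Matrix.add_apply, hB, hJm]
    ring
  rw [tsum_congr hterm]
  rw [Summable.tsum_add (sShift.sub sAB) (sAJ.sub sJA), Summable.tsum_sub sShift sAB, Summable.tsum_sub sAJ sJA]
  rw [tsum_shift' hzn (sA p q), tsum_entry_mul sA B p q, tsum_entry_mul sA Jm p q,
    tsum_entry_mul_left sA Jm p q, ← hR]
  have h10 : blk (Jpow a b c t 0) 0 0 p q = (1 : Matrix (Fin 2) (Fin 2) ℂ) p q := by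
    have : Jpow a b c t 0 (2*0+(p:ℕ)) (2*0+(q:ℕ))
        = if (2*0+(p:ℕ)) = (2*0+(q:ℕ)) then 1 else 0 := rfl
    simp only [blk, Matrix.of_apply, this, Matrix.one_apply]
    simp [Fin.val_inj]
  have hRpq : (∑' n, blk (Jpow a b c t n) 0 0 p q / z ^ (n+1)) = Rfun a b c z t p q := rfl
  rw [h10, hRpq]
  have hexp : (Rfun a b c z t * (z • (1 : Matrix (Fin 2) (Fin 2) ℂ) - B) - 1
      + (Rfun a b c z t * Jm - Jm * Rfun a b c z t)) p q
      = z * Rfun a b c z t p q - (1 : Matrix (Fin 2) (Fin 2) ℂ) p q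
        - (Rfun a b c z t * B) p q
        + ((Rfun a b c z t * Jm) p q - (Jm * Rfun a b c z t) p q) := by
    rw [Matrix.mul_sub, Matrix.mul_smul, Matrix.mul_one]
    simp only [Matrix.sub_apply, Matrix.add_apply, Matrix.smul_apply, smul_eq_mul]
    ring
  rw [hexp]

end MainIdentity

/-- For a uniformly bounded four-banded `J`, the evolution equations of all blocks
`(Jⁿ)₁₁` are equivalent to the evolution equation of the resolvent function `R_J`. -/
theorem block_evolution_iff_resolvent_evolution (a b c : ℕ → ℝ → ℂ) (K : ℝ)
    (hK : ∀ t : ℝ, ∀ n i j : ℕ, ‖Jpow a b c t n i j‖ ≤ K ^ n) :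
    (∀ n : ℕ, ∀ t : ℝ, ∀ p q : Fin 2,
        HasDerivAt (fun s => blk (Jpow a b c s n) 0 0 p q)
          ((blk (Jpow a b c t (n + 1)) 0 0
            - blk (Jpow a b c t n) 0 0 * blk (Jmat a b c t) 0 0
            + (blk (Jpow a b c t n) 0 0 * blk (Jminus b c t) 0 0
              - blk (Jminus b c t) 0 0 * blk (Jpow a b c t n) 0 0)) p q) t) ↔
      (∀ z : ℂ, K < ‖z‖ → ∀ t : ℝ, ∀ p q : Fin 2,
        HasDerivAt (fun s => Rfun a b c z s p q)
          ((Rfun a b c z t * (z • (1 : Matrix (Fin 2) (Fin 2) ℂ) - blk (Jmat a b c t) 0 0)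
            - 1
            + (Rfun a b c z t * blk (Jminus b c t) 0 0
              - blk (Jminus b c t) 0 0 * Rfun a b c z t)) p q) t) := by
  have hK1 : 1 ≤ K := one_le_K a b c hK
  have hA : ∀ (p q : Fin 2) (m : ℕ) (s : ℝ), ‖blk (Jpow a b c s m) 0 0 p q‖ ≤ K ^ m :=
    fun p q m s => blkJpow_bound a b c hK s m p q
  have hG : ∀ (p q : Fin 2) (m : ℕ) (s : ℝ), ‖Gmat a b c m s p q‖ ≤ 7 * K ^ (m+1) :=
    fun p q m s => Gmat_bound a b c hK m s p q
  constructor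
  · intro hb z hz t p q
    have hd := key_forward (fun m s => blk (Jpow a b c s m) 0 0 p q)
      (fun m s => Gmat a b c m s p q) K hK1 (fun m s => hA p q m s) (fun m s => hG p q m s)
      (fun m t' => hb m t' p q) z hz t
    have heq := tsum_G_eq a b c hK z hz t p q
    rw [← heq]
    exact hd
  · intro hc m t p q
    apply key_backward (fun m s => blk (Jpow a b c s m) 0 0 p q)
      (fun m s => Gmat a b c m s p q) K hK1 (fun m s => hA p q m s) (fun m s => hG p q m s)
    intro z hz t'
    have h := hc z hz t' p q
    rw [← tsum_G_eq a b c hK z hz t' p q] at h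
    exact h
end
end
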